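/- For all weight modules V and W over Ū, the map c_{V,W} : V⊗W → W⊗V is invertible, with inverse c_{V,W}^{−1} = (Σ_{k=0}^{r−1} ((−1)^k {1}^{2k}/{k}!) q^{−k(k−1)/2} E^k ⊗ F^k) ∘ q^{−H⊗H/2} ∘ τ^{−1}, where q^{−H⊗H/2} multiplies v⊗w by q^{−λμ/2} for weight vectors v, w of weights λ, μ. -/

import Mathlib

noncomputable section

open scoped TensorProduct

namespace Unrolled

/-- `q^z = exp(π √-1 z / r)`. -/
def qc (r : ℕ) (z : ℂ) : ℂ := Complex.exp (Real.pi * Complex.I * z / r)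

/-- `{z} = q^z - q^{-z}`. -/
def qbrk (r : ℕ) (z : ℂ) : ℂ := qc r z - qc r (-z)

/-- `[z] = {z}/{1}`. -/
def qint (r : ℕ) (z : ℂ) : ℂ := qbrk r z / qbrk r 1

/-- `{n}! = ∏_{i=1}^n {i}`. -/
def qbrkFact (r n : ℕ) : ℂ := ∏ i ∈ Finset.range n, qbrk r ((i : ℂ) + 1)

/-- `[n]! = ∏_{i=1}^n [i]`. -/
def qintFact (r n : ℕ) : ℂ := ∏ i ∈ Finset.range n, qint r ((i : ℂ) + 1)

/-- The data of five operators `K, K⁻¹, H, E, F` on a complex vector space. -/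
structure Ops (V : Type) [AddCommGroup V] [Module ℂ V] where
  K : Module.End ℂ V
  Kinv : Module.End ℂ V
  H : Module.End ℂ V
  E : Module.End ℂ V
  F : Module.End ℂ V

/-- A module over the restricted unrolled quantum group `Ū = Ū_q^H(sl₂(ℂ))`:
five operators satisfying the defining relations of `Ū`. -/
structure Rep (r : ℕ) (V : Type) [AddCommGroup V] [Module ℂ V] extends Ops V where
  rel_KKinv : K * Kinv = 1
  rel_KinvK : Kinv * K = 1
  rel_HK : H * K = K * H
  rel_HE : H * E - E * H = (2 : ℂ) • E
  rel_HF : H * F - F * H = (-2 : ℂ) • F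
  rel_KE : K * E = qc r 2 • (E * K)
  rel_KF : K * F = qc r (-2) • (F * K)
  rel_EF : E * F - F * E = (qbrk r 1)⁻¹ • (K - Kinv)
  rel_Er : E ^ r = 0
  rel_Fr : F ^ r = 0

variable {V W U : Type} [AddCommGroup V] [Module ℂ V] [AddCommGroup W] [Module ℂ W]
  [AddCommGroup U] [Module ℂ U]

/-- A `Ū`-submodule: a subspace invariant under the five operators. -/
def Ops.Invariant (A : Ops V) (p : Submodule ℂ V) : Prop :=
  (∀ v ∈ p, A.K v ∈ p) ∧ (∀ v ∈ p, A.Kinv v ∈ p) ∧ (∀ v ∈ p, A.H v ∈ p) ∧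
    (∀ v ∈ p, A.E v ∈ p) ∧ (∀ v ∈ p, A.F v ∈ p)

/-- A simple `Ū`-module: nonzero, with no nonzero proper invariant subspace. -/
def Ops.IsSimple (A : Ops V) : Prop :=
  (∃ v : V, v ≠ 0) ∧ ∀ p : Submodule ℂ V, A.Invariant p → p = ⊥ ∨ p = ⊤

/-- A weight module: finite dimensional, a direct sum of `H`-eigenspaces, on which `K`
acts by `q^μ` on the `H`-eigenspace of eigenvalue `μ`. -/
structure IsWeight (r : ℕ) {V : Type} [AddCommGroup V] [Module ℂ V] (A : Ops V) : Prop where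
  finDim : FiniteDimensional ℂ V
  sup_eigenspaces : (⨆ μ : ℂ, Module.End.eigenspace A.H μ) = ⊤
  K_apply : ∀ (μ : ℂ), ∀ v ∈ Module.End.eigenspace A.H μ, A.K v = qc r μ • v

/-- A `Ū`-linear map. -/
def IsEquivariant (A : Ops V) (B : Ops W) (f : V →ₗ[ℂ] W) : Prop :=
  (∀ v, f (A.K v) = B.K (f v)) ∧ (∀ v, f (A.Kinv v) = B.Kinv (f v)) ∧
    (∀ v, f (A.H v) = B.H (f v)) ∧ (∀ v, f (A.E v) = B.E (f v)) ∧
    (∀ v, f (A.F v) = B.F (f v))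

/-- Isomorphism of `Ū`-modules. -/
def OpsIso (A : Ops V) (B : Ops W) : Prop :=
  ∃ e : V ≃ₗ[ℂ] W, IsEquivariant A B (e : V →ₗ[ℂ] W)

/-- The weight `α + r - 1 - 2i` of the basis vector `v_i` of the Verma module `V_α`. -/
def wt (r : ℕ) (α : ℂ) (i : ℕ) : ℂ := α + r - 1 - 2 * i

/-- The coefficient `{i}{i-α}/{1}²` occurring in `E v_i`. -/
def cE (r : ℕ) (α : ℂ) (i : ℕ) : ℂ := qbrk r i * qbrk r ((i : ℂ) - α) / qbrk r 1 ^ 2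

/-- The Verma module `V_α` of highest weight `α + r - 1`, realized on `Fin r → ℂ`
with basis `v_0, …, v_{r-1}`. -/
def vermaOps (r : ℕ) (α : ℂ) : Ops (Fin r → ℂ) where
  K := (Matrix.diagonal fun i : Fin r => qc r (wt r α (i : ℕ))).mulVecLin
  Kinv := (Matrix.diagonal fun i : Fin r => qc r (-wt r α (i : ℕ))).mulVecLin
  H := (Matrix.diagonal fun i : Fin r => wt r α (i : ℕ)).mulVecLin
  E := (Matrix.of fun i j : Fin r =>
    if (j : ℕ) = (i : ℕ) + 1 then cE r α (j : ℕ) else 0).mulVecLin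
  F := (Matrix.of fun i j : Fin r =>
    if (i : ℕ) = (j : ℕ) + 1 then (1 : ℂ) else 0).mulVecLin

/-- `α_{l,n} = (l-1)r + n + 1`, so that `S_n^{lr}` is a quotient of `V_{α_{l,n}}`. -/
def aln (r : ℕ) (l : ℤ) (n : ℕ) : ℂ := ((l : ℂ) - 1) * r + n + 1

/-- The simple module `S_n^{lr}` of highest weight `lr + n` and dimension `n+1`,
realized on `Fin (n+1) → ℂ`. -/
def smodOps (r : ℕ) (l : ℤ) (n : ℕ) : Ops (Fin (n + 1) → ℂ) where
  K := (Matrix.diagonal fun i : Fin (n + 1) => qc r (wt r (aln r l n) (i : ℕ))).mulVecLin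
  Kinv := (Matrix.diagonal fun i : Fin (n + 1) => qc r (-wt r (aln r l n) (i : ℕ))).mulVecLin
  H := (Matrix.diagonal fun i : Fin (n + 1) => wt r (aln r l n) (i : ℕ)).mulVecLin
  E := (Matrix.of fun i j : Fin (n + 1) =>
    if (j : ℕ) = (i : ℕ) + 1 then cE r (aln r l n) (j : ℕ) else 0).mulVecLin
  F := (Matrix.of fun i j : Fin (n + 1) =>
    if (i : ℕ) = (j : ℕ) + 1 then (1 : ℂ) else 0).mulVecLin

/-- `α ∈ (ℂ∖ℤ) ∪ rℤ`. -/
def goodα (r : ℕ) (α : ℂ) : Prop := (¬∃ n : ℤ, α = (n : ℂ)) ∨ ∃ m : ℤ, α = (r : ℂ) * m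

/-- The tensor product `Ū`-module structure induced by the coproduct `Δ`. -/
def tensorOps (A : Ops V) (B : Ops W) : Ops (V ⊗[ℂ] W) where
  K := TensorProduct.map A.K B.K
  Kinv := TensorProduct.map A.Kinv B.Kinv
  H := TensorProduct.map A.H (LinearMap.id : W →ₗ[ℂ] W) +
    TensorProduct.map (LinearMap.id : V →ₗ[ℂ] V) B.H
  E := TensorProduct.map (LinearMap.id : V →ₗ[ℂ] V) B.E + TensorProduct.map A.E B.K
  F := TensorProduct.map A.F (LinearMap.id : W →ₗ[ℂ] W) + TensorProduct.map A.Kinv B.F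

/-- The operator `Σ_{l=0}^{r-1} ({1}^{2l}/{l}!) q^{l(l-1)/2} E^l ⊗ F^l` on `V ⊗ W`. -/
def braidSum (r : ℕ) (A : Ops V) (B : Ops W) : Module.End ℂ (V ⊗[ℂ] W) :=
  ∑ l ∈ Finset.range r,
    (qbrk r 1 ^ (2 * l) / qbrkFact r l * qc r ((l : ℂ) * ((l : ℂ) - 1) / 2)) •
      TensorProduct.map (A.E ^ l) (B.F ^ l)

/-- The defining property of the operator `q^{H⊗H/2}` on `V ⊗ W`: it multiplies
`v ⊗ w` by `q^{λμ/2}` for weight vectors `v, w` of weights `λ, μ`. -/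
def IsqHH (r : ℕ) (A : Ops V) (B : Ops W) (Q : Module.End ℂ (V ⊗[ℂ] W)) : Prop :=
  ∀ (lam mu : ℂ) (v : V) (w : W),
    v ∈ Module.End.eigenspace A.H lam → w ∈ Module.End.eigenspace B.H mu →
      Q (v ⊗ₜ[ℂ] w) = qc r (lam * mu / 2) • (v ⊗ₜ[ℂ] w)

/-- The braiding `c_{V,W} = τ ∘ q^{H⊗H/2} ∘ Σ_l ({1}^{2l}/{l}!) q^{l(l-1)/2} E^l ⊗ F^l`,
where `Q` is the operator `q^{H⊗H/2}`. -/
def braidMap (r : ℕ) (A : Ops V) (B : Ops W) (Q : Module.End ℂ (V ⊗[ℂ] W)) :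
    V ⊗[ℂ] W →ₗ[ℂ] W ⊗[ℂ] V :=
  (TensorProduct.comm ℂ V W).toLinearMap ∘ₗ Q ∘ₗ braidSum r A B

/-- The operator `Σ_{k=0}^{r-1} ((-1)^k {1}^{2k}/{k}!) q^{-k(k-1)/2} E^k ⊗ F^k`. -/
def braidSumInv (r : ℕ) (A : Ops V) (B : Ops W) : Module.End ℂ (V ⊗[ℂ] W) :=
  ∑ k ∈ Finset.range r,
    ((-1 : ℂ) ^ k * qbrk r 1 ^ (2 * k) / qbrkFact r k *
        qc r (-((k : ℂ) * ((k : ℂ) - 1) / 2))) •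
      TensorProduct.map (A.E ^ k) (B.F ^ k)

/-- The defining property of the operator `q^{-H⊗H/2}` on `V ⊗ W`. -/
def IsqHHneg (r : ℕ) (A : Ops V) (B : Ops W) (Q : Module.End ℂ (V ⊗[ℂ] W)) : Prop :=
  ∀ (lam mu : ℂ) (v : V) (w : W),
    v ∈ Module.End.eigenspace A.H lam → w ∈ Module.End.eigenspace B.H mu →
      Q (v ⊗ₜ[ℂ] w) = qc r (-(lam * mu / 2)) • (v ⊗ₜ[ℂ] w)

/-- The claimed inverse braiding
`(Σ_k ((-1)^k {1}^{2k}/{k}!) q^{-k(k-1)/2} E^k ⊗ F^k) ∘ q^{-H⊗H/2} ∘ τ⁻¹`. -/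
def braidMapInv (r : ℕ) (A : Ops V) (B : Ops W) (Q' : Module.End ℂ (V ⊗[ℂ] W)) :
    W ⊗[ℂ] V →ₗ[ℂ] V ⊗[ℂ] W :=
  braidSumInv r A B ∘ₗ Q' ∘ₗ (TensorProduct.comm ℂ V W).symm.toLinearMap

/-! ### Auxiliary development for `stmt9` -/

section Aux

lemma qc_add (r : ℕ) (a b : ℂ) : qc r (a + b) = qc r a * qc r b := by
  rw [qc, qc, qc, ← Complex.exp_add]
  congr 1
  ring

lemma qc_zero (r : ℕ) : qc r 0 = 1 := by simp [qc]

lemma qc_mul_neg (r : ℕ) (a : ℂ) : qc r a * qc r (-a) = 1 := by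
  rw [← qc_add]; simp [qc_zero]

lemma qbrkFact_zero (r : ℕ) : qbrkFact r 0 = 1 := by simp [qbrkFact]

lemma qbrkFact_succ (r n : ℕ) :
    qbrkFact r (n + 1) = qbrkFact r n * qbrk r ((n : ℂ) + 1) := by
  rw [qbrkFact, Finset.prod_range_succ, qbrkFact]

lemma qbrk_nat_ne_zero (r : ℕ) {j : ℕ} (h1 : 1 ≤ j) (h2 : j < r) :
    qbrk r (j : ℂ) ≠ 0 := by
  have hrC : (r : ℂ) ≠ 0 := Nat.cast_ne_zero.mpr (by omega)
  have hπ : (Real.pi : ℂ) ≠ 0 := by exact_mod_cast Real.pi_ne_zero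
  have hI := Complex.I_ne_zero
  intro h
  have h0 : qc r (j : ℂ) = qc r (-(j : ℂ)) := sub_eq_zero.mp h
  have h1' : qc r (j : ℂ) * qc r (-(j : ℂ)) = 1 := qc_mul_neg r _
  rw [← h0] at h1'
  have h2' : Complex.exp (Real.pi * Complex.I * (j : ℂ) / r
      + Real.pi * Complex.I * (j : ℂ) / r) = 1 := by
    rw [Complex.exp_add]; exact h1'
  rw [Complex.exp_eq_one_iff] at h2'
  obtain ⟨n, hn⟩ := h2'
  have hc : (2 * (Real.pi : ℂ) * Complex.I) ≠ 0 := by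
    intro hc0
    apply hπ
    have := mul_eq_zero.mp hc0
    rcases this with h' | h'
    · rcases mul_eq_zero.mp h' with h'' | h''
      · norm_num at h''
      · exact h''
    · exact absurd h' hI
  have hj : (j : ℂ) = n * r := by
    apply mul_left_cancel₀ hc
    field_simp [hrC] at hn
    linear_combination (↑Real.pi * Complex.I) * hn
  have hjZ : (j : ℤ) = n * r := by exact_mod_cast hj
  have hjl : (1 : ℤ) ≤ (j : ℤ) := by exact_mod_cast h1
  have hju : (j : ℤ) < (r : ℤ) := by exact_mod_cast h2
  have hrpos : (0 : ℤ) < (r : ℤ) := by exact_mod_cast (by omega : 0 < r)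
  rcases le_or_gt n 0 with hn0 | hn0
  · have : n * (r : ℤ) ≤ 0 := mul_nonpos_of_nonpos_of_nonneg hn0 (by positivity)
    omega
  · have h1n : (1 : ℤ) ≤ n := hn0
    have : (r : ℤ) ≤ n * r := le_mul_of_one_le_left (by positivity) h1n
    omega

lemma qbrkFact_ne_zero (r : ℕ) {n : ℕ} (h : n < r) : qbrkFact r n ≠ 0 := by
  rw [qbrkFact]
  apply Finset.prod_ne_zero_iff.mpr
  intro i hi
  rw [Finset.mem_range] at hi
  have : ((i : ℂ) + 1) = ((i + 1 : ℕ) : ℂ) := by push_cast; ring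
  rw [this]
  exact qbrk_nat_ne_zero r (by omega) (by omega)

end Aux
section Aux2

/-- Balanced q-binomial coefficients, defined via the q-Pascal recurrence. -/
def Bb (r : ℕ) : ℕ → ℕ → ℂ
  | 0, 0 => 1
  | 0, _ + 1 => 0
  | m + 1, 0 => Bb r m 0
  | m + 1, k + 1 => qc r ((k : ℂ) + 1) * Bb r m (k + 1) + qc r ((k : ℂ) - (m : ℂ)) * Bb r m k

lemma Bb_zero_right (r : ℕ) : ∀ m, Bb r m 0 = 1 := by
  intro m; induction m with
  | zero => rfl
  | succ m ih => rw [Bb, ih]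

lemma Bb_gt (r : ℕ) : ∀ m k, m < k → Bb r m k = 0 := by
  intro m
  induction m with
  | zero => intro k hk; match k, hk with | k + 1, _ => rfl
  | succ m ih =>
    intro k hk
    match k, hk with
    | k + 1, hk =>
      rw [Bb, ih (k + 1) (by omega), ih k (by omega), mul_zero, mul_zero, add_zero]

lemma Bb_diag (r : ℕ) : ∀ m, Bb r m m = 1 := by
  intro m; induction m with
  | zero => rfl
  | succ m ih =>
    rw [Bb, Bb_gt r m (m + 1) (by omega), ih, mul_zero, zero_add, mul_one, sub_self, qc_zero]

/-- Identity A: the alternating q-binomial sum vanishes. -/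
lemma sumA (r : ℕ) : ∀ m, 1 ≤ m →
    ∑ k ∈ Finset.range (m + 1),
      (-1 : ℂ) ^ k * qc r (-((k : ℂ) * ((m : ℂ) - 1))) * Bb r m k = 0 := by
  intro m hm
  induction m with
  | zero => omega
  | succ m IH =>
    rcases Nat.lt_or_ge m 1 with hm1 | hm1
    · -- base case : m = 0
      have : m = 0 := by omega
      subst this
      rw [Finset.sum_range_succ, Finset.sum_range_succ, Finset.sum_range_zero]
      norm_num [Bb, Bb_zero_right, qc_zero]
    · have IH := IH hm1
      rw [Finset.sum_range_succ']
      have key : ∀ k, (-1 : ℂ) ^ (k + 1)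
            * qc r (-(((k + 1 : ℕ) : ℂ) * (((m + 1 : ℕ) : ℂ) - 1))) * Bb r (m + 1) (k + 1)
          = (-1 : ℂ) ^ (k + 1) * qc r (-(((k + 1 : ℕ) : ℂ) * ((m : ℂ) - 1))) * Bb r m (k + 1)
            + (-(qc r (-(2 * (m : ℂ)))))
              * ((-1 : ℂ) ^ k * qc r (-((k : ℂ) * ((m : ℂ) - 1))) * Bb r m k) := by
        intro k
        rw [Bb]
        have e1 : qc r (-(((k + 1 : ℕ) : ℂ) * (((m + 1 : ℕ) : ℂ) - 1))) * qc r ((k : ℂ) + 1)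
            = qc r (-(((k + 1 : ℕ) : ℂ) * ((m : ℂ) - 1))) := by
          rw [← qc_add]; congr 1; push_cast; ring
        have e2 : qc r (-(((k + 1 : ℕ) : ℂ) * (((m + 1 : ℕ) : ℂ) - 1)))
              * qc r ((k : ℂ) - (m : ℂ))
            = qc r (-(2 * (m : ℂ))) * qc r (-((k : ℂ) * ((m : ℂ) - 1))) := by
          rw [← qc_add, ← qc_add]; congr 1; push_cast; ring
        linear_combination ((-1 : ℂ) ^ (k + 1) * Bb r m (k + 1)) * e1
          + ((-1 : ℂ) ^ (k + 1) * Bb r m k) * e2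
      rw [Finset.sum_congr rfl fun k _ => key k, Finset.sum_add_distrib, ← Finset.mul_sum, IH,
        mul_zero, add_zero]
      have hs : ∑ j ∈ Finset.range (m + 1 + 1),
          (-1 : ℂ) ^ j * qc r (-((j : ℂ) * ((m : ℂ) - 1))) * Bb r m j = 0 := by
        rw [Finset.sum_range_succ, IH, zero_add, Bb_gt r m (m + 1) (by omega), mul_zero]
      rw [Finset.sum_range_succ'] at hs
      simp only [Nat.cast_zero, zero_mul, neg_zero, qc_zero, pow_zero, one_mul, mul_one,
        Bb_zero_right] at hs ⊢
      exact hs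

/-- Identity B: `{k}! {m-k}! Bb m k = {m}!`. -/
lemma sumB (r : ℕ) : ∀ m k, k ≤ m →
    qbrkFact r k * qbrkFact r (m - k) * Bb r m k = qbrkFact r m := by
  intro m
  induction m with
  | zero =>
    intro k hk
    interval_cases k
    simp [Bb, qbrkFact_zero]
  | succ m IH =>
    intro k hk
    match k with
    | 0 => simp [qbrkFact_zero, Bb_zero_right]
    | j + 1 =>
      rcases Nat.lt_or_ge j m with hj | hj
      · have IH1 := IH (j + 1) (by omega)
        have IH0 := IH j (by omega)
        have hsub : m + 1 - (j + 1) = m - j := by omega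
        rw [Bb, hsub]
        have h1 : qbrkFact r (m - j)
            = qbrkFact r (m - (j + 1)) * qbrk r (((m - (j + 1) : ℕ) : ℂ) + 1) := by
          have h' : m - j = (m - (j + 1)) + 1 := by omega
          rw [h', qbrkFact_succ]
        have h2 : qbrkFact r (j + 1) = qbrkFact r j * qbrk r ((j : ℂ) + 1) :=
          qbrkFact_succ r j
        have h3 : qbrkFact r (m + 1) = qbrkFact r m * qbrk r ((m : ℂ) + 1) :=
          qbrkFact_succ r m
        have hcast : ((m - (j + 1) : ℕ) : ℂ) = (m : ℂ) - (j : ℂ) - 1 := by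
          push_cast [Nat.cast_sub (by omega : j + 1 ≤ m)]; ring
        have hbr : qc r ((j : ℂ) + 1) * qbrk r (((m - (j + 1) : ℕ) : ℂ) + 1)
              + qc r ((j : ℂ) - (m : ℂ)) * qbrk r ((j : ℂ) + 1)
            = qbrk r ((m : ℂ) + 1) := by
          rw [hcast]
          simp only [qbrk]
          have a1 : qc r ((j : ℂ) + 1) * qc r ((m : ℂ) - (j : ℂ) - 1 + 1)
              = qc r ((m : ℂ) + 1) := by
            rw [← qc_add]; congr 1; ring
          have a3 : qc r ((j : ℂ) - (m : ℂ)) * qc r (-((j : ℂ) + 1))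
              = qc r (-((m : ℂ) + 1)) := by
            rw [← qc_add]; congr 1; ring
          have a4 : qc r (-((m : ℂ) - (j : ℂ) - 1 + 1)) = qc r ((j : ℂ) - (m : ℂ)) := by
            congr 1; ring
          linear_combination a1 - a3 - qc r ((j : ℂ) + 1) * a4
        linear_combination (qc r ((j : ℂ) + 1) * Bb r m (j + 1) * qbrkFact r (j + 1)) * h1
          + (qc r ((j : ℂ) - (m : ℂ)) * Bb r m j * qbrkFact r (m - j)) * h2
          + (qc r ((j : ℂ) + 1) * qbrk r (((m - (j + 1) : ℕ) : ℂ) + 1)) * IH1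
          + (qc r ((j : ℂ) - (m : ℂ)) * qbrk r ((j : ℂ) + 1)) * IH0
          + qbrkFact r m * hbr - h3
      · have : j = m := by omega
        subst this
        simp [Nat.sub_self, qbrkFact_zero, Bb_diag]

end Aux2
section Aux3

/-- The coefficient of `E^l ⊗ F^l` in `braidSum`. -/
def coeA (r l : ℕ) : ℂ :=
  qbrk r 1 ^ (2 * l) / qbrkFact r l * qc r ((l : ℂ) * ((l : ℂ) - 1) / 2)

/-- The coefficient of `E^k ⊗ F^k` in `braidSumInv`. -/
def coeB (r k : ℕ) : ℂ :=
  (-1 : ℂ) ^ k * qbrk r 1 ^ (2 * k) / qbrkFact r k * qc r (-((k : ℂ) * ((k : ℂ) - 1) / 2))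

/-- The Cauchy-product coefficients of the two braiding sums. -/
lemma coeBA (r : ℕ) {m : ℕ} (hm : m < r) :
    ∑ k ∈ Finset.range (m + 1), coeB r k * coeA r (m - k)
      = if m = 0 then 1 else 0 := by
  rcases Nat.eq_zero_or_pos m with rfl | hm0
  · norm_num [coeA, coeB, qbrkFact_zero, qc_zero]
  · rw [if_neg (by omega)]
    have key : ∀ k ∈ Finset.range (m + 1), coeB r k * coeA r (m - k)
        = (qbrk r 1 ^ (2 * m) * qc r ((m : ℂ) * ((m : ℂ) - 1) / 2) / qbrkFact r m)
          * ((-1 : ℂ) ^ k * qc r (-((k : ℂ) * ((m : ℂ) - 1))) * Bb r m k) := by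
      intro k hk
      rw [Finset.mem_range] at hk
      have hkm : k ≤ m := by omega
      have hk0 : qbrkFact r k ≠ 0 := qbrkFact_ne_zero r (by omega)
      have hk1 : qbrkFact r (m - k) ≠ 0 := qbrkFact_ne_zero r (by omega)
      have hm0' : qbrkFact r m ≠ 0 := qbrkFact_ne_zero r hm
      have hB := sumB r m k hkm
      have hcast : ((m - k : ℕ) : ℂ) = (m : ℂ) - (k : ℂ) := by
        push_cast [Nat.cast_sub hkm]; ring
      have hpow : qbrk r 1 ^ (2 * k) * qbrk r 1 ^ (2 * (m - k)) = qbrk r 1 ^ (2 * m) := by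
        rw [← pow_add]; congr 1; omega
      have hqc : qc r (-((k : ℂ) * ((k : ℂ) - 1) / 2))
            * qc r (((m : ℂ) - (k : ℂ)) * (((m : ℂ) - (k : ℂ)) - 1) / 2)
          = qc r ((m : ℂ) * ((m : ℂ) - 1) / 2) * qc r (-((k : ℂ) * ((m : ℂ) - 1))) := by
        rw [← qc_add, ← qc_add]; congr 1; ring
      have hneg : qc r (-((k : ℂ) * ((k : ℂ) - 1)) / 2)
          = qc r (-((k : ℂ) * ((k : ℂ) - 1) / 2)) := by
        congr 1; ring
      rw [coeA, coeB, hcast]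
      field_simp
      linear_combination (-(qbrk r 1 ^ (2 * k) * qbrk r 1 ^ (2 * (m - k))
            * qc r ((m : ℂ) * ((m : ℂ) - 1) / 2) * qc r (-((k : ℂ) * ((m : ℂ) - 1))))) * hB
        + (qbrkFact r k * qbrkFact r (m - k) * Bb r m k
            * qc r ((m : ℂ) * ((m : ℂ) - 1) / 2) * qc r (-((k : ℂ) * ((m : ℂ) - 1)))) * hpow
        + (qbrk r 1 ^ (2 * k) * qbrk r 1 ^ (2 * (m - k))
            * qbrkFact r m) * hqc
    rw [Finset.sum_congr rfl key, ← Finset.mul_sum, sumA r m hm0, mul_zero]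

open Polynomial in
/-- The generating polynomial of `braidSum`. -/
def polyA (r : ℕ) : Polynomial ℂ := ∑ l ∈ Finset.range r, C (coeA r l) * X ^ l

open Polynomial in
/-- The generating polynomial of `braidSumInv`. -/
def polyB (r : ℕ) : Polynomial ℂ := ∑ k ∈ Finset.range r, C (coeB r k) * X ^ k

open Polynomial in
lemma coeff_polyA (r d : ℕ) : (polyA r).coeff d = if d < r then coeA r d else 0 := by
  simp [polyA, finset_sum_coeff, coeff_C_mul, coeff_X_pow]

open Polynomial in
lemma coeff_polyB (r d : ℕ) : (polyB r).coeff d = if d < r then coeB r d else 0 := by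
  simp [polyB, finset_sum_coeff, coeff_C_mul, coeff_X_pow]

open Polynomial in
lemma dvd_BA (r : ℕ) : (X : Polynomial ℂ) ^ r ∣ polyB r * polyA r - 1 := by
  rw [X_pow_dvd_iff]
  intro d hd
  rw [coeff_sub, coeff_mul, Finset.Nat.sum_antidiagonal_eq_sum_range_succ_mk]
  have e : ∀ k ∈ Finset.range (d + 1),
      (polyB r).coeff k * (polyA r).coeff (d - k) = coeB r k * coeA r (d - k) := by
    intro k hk
    rw [Finset.mem_range] at hk
    rw [coeff_polyA, coeff_polyB, if_pos (by omega), if_pos (by omega)]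
  rw [Finset.sum_congr rfl e, coeBA r hd, coeff_one]
  by_cases h0 : d = 0 <;> simp [h0]

end Aux3
section Aux4

open Polynomial in
lemma braidSum_eq (r : ℕ) (A : Ops V) (B : Ops W) :
    braidSum r A B = Polynomial.aeval (TensorProduct.map A.E B.F) (polyA r) := by
  rw [polyA, map_sum, braidSum]
  refine Finset.sum_congr rfl fun l _ => ?_
  rw [map_mul, Polynomial.aeval_C, map_pow, Polynomial.aeval_X, TensorProduct.map_pow,
    ← Algebra.smul_def, coeA]

open Polynomial in
lemma braidSumInv_eq (r : ℕ) (A : Ops V) (B : Ops W) :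
    braidSumInv r A B = Polynomial.aeval (TensorProduct.map A.E B.F) (polyB r) := by
  rw [polyB, map_sum, braidSumInv]
  refine Finset.sum_congr rfl fun k _ => ?_
  rw [map_mul, Polynomial.aeval_C, map_pow, Polynomial.aeval_X, TensorProduct.map_pow,
    ← Algebra.smul_def, coeB]

lemma Npow_eq_zero (r : ℕ) (A : Ops V) (B : Ops W) (hE : A.E ^ r = 0) (hF : B.F ^ r = 0) :
    (TensorProduct.map A.E B.F) ^ r = 0 := by
  rw [TensorProduct.map_pow, hE, hF]
  exact TensorProduct.ext' fun v w => by simp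

open Polynomial in
lemma SS (r : ℕ) (A : Ops V) (B : Ops W) (hE : A.E ^ r = 0) (hF : B.F ^ r = 0) :
    braidSumInv r A B * braidSum r A B = 1 ∧ braidSum r A B * braidSumInv r A B = 1 := by
  have hN := Npow_eq_zero r A B hE hF
  obtain ⟨g, hg⟩ := dvd_BA r
  have hfac : polyB r * polyA r = 1 + X ^ r * g := by linear_combination hg
  have hfac2 : polyA r * polyB r = 1 + X ^ r * g := by linear_combination hg
  constructor
  · rw [braidSum_eq, braidSumInv_eq, ← map_mul, hfac, map_add, map_one, map_mul, map_pow,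
      Polynomial.aeval_X, hN, zero_mul, add_zero]
  · rw [braidSum_eq, braidSumInv_eq, ← map_mul, hfac2, map_add, map_one, map_mul, map_pow,
      Polynomial.aeval_X, hN, zero_mul, add_zero]

lemma G_eq_one (A : Ops V) (B : Ops W)
    (hVs : (⨆ μ : ℂ, Module.End.eigenspace A.H μ) = ⊤)
    (hWs : (⨆ μ : ℂ, Module.End.eigenspace B.H μ) = ⊤)
    (G : Module.End ℂ (V ⊗[ℂ] W))
    (h : ∀ (lam mu : ℂ) (v : V) (w : W), v ∈ Module.End.eigenspace A.H lam →
      w ∈ Module.End.eigenspace B.H mu → G (v ⊗ₜ[ℂ] w) = v ⊗ₜ[ℂ] w) :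
    G = 1 := by
  have stage1 : ∀ (lam : ℂ) (v : V), v ∈ Module.End.eigenspace A.H lam →
      ∀ w : W, G (v ⊗ₜ[ℂ] w) = v ⊗ₜ[ℂ] w := by
    intro lam v hv w
    have hker : (⊤ : Submodule ℂ W) ≤ LinearMap.ker
        ((G - 1) ∘ₗ TensorProduct.mk ℂ V W v) := by
      rw [← hWs]
      refine iSup_le fun mu w' hw' => ?_
      rw [LinearMap.mem_ker, LinearMap.comp_apply, TensorProduct.mk_apply,
        LinearMap.sub_apply, Module.End.one_apply, h lam mu v w' hv hw', sub_self]
    have h0 := hker (Submodule.mem_top : w ∈ ⊤)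
    rw [LinearMap.mem_ker, LinearMap.comp_apply, TensorProduct.mk_apply, LinearMap.sub_apply,
      Module.End.one_apply, sub_eq_zero] at h0
    exact h0
  refine TensorProduct.ext' fun v w => ?_
  have hker : (⊤ : Submodule ℂ V) ≤ LinearMap.ker
      ((G - 1) ∘ₗ (TensorProduct.mk ℂ V W).flip w) := by
    rw [← hVs]
    refine iSup_le fun lam v' hv' => ?_
    rw [LinearMap.mem_ker, LinearMap.comp_apply, LinearMap.flip_apply, TensorProduct.mk_apply,
      LinearMap.sub_apply, Module.End.one_apply, stage1 lam v' hv' w, sub_self]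
  have h0 := hker (Submodule.mem_top : v ∈ ⊤)
  rw [LinearMap.mem_ker, LinearMap.comp_apply, LinearMap.flip_apply, TensorProduct.mk_apply,
    LinearMap.sub_apply, Module.End.one_apply, sub_eq_zero] at h0
  exact h0

end Aux4
/-- The braiding `c_{V,W}` is invertible, with inverse as stated. -/
theorem stmt9 (r : ℕ) (hr : 2 ≤ r) (ρV : Rep r V) (ρW : Rep r W)
    (hV : IsWeight r ρV.toOps) (hW : IsWeight r ρW.toOps)
    (Q : Module.End ℂ (V ⊗[ℂ] W)) (hQ : IsqHH r ρV.toOps ρW.toOps Q)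
    (Q' : Module.End ℂ (V ⊗[ℂ] W)) (hQ' : IsqHHneg r ρV.toOps ρW.toOps Q') :
    braidMapInv r ρV.toOps ρW.toOps Q' ∘ₗ braidMap r ρV.toOps ρW.toOps Q =
      LinearMap.id ∧
    braidMap r ρV.toOps ρW.toOps Q ∘ₗ braidMapInv r ρV.toOps ρW.toOps Q' =
      LinearMap.id := by
  obtain ⟨hS1, hS2⟩ := SS r ρV.toOps ρW.toOps ρV.rel_Er ρW.rel_Fr
  have hQ'Q : Q' * Q = 1 := by
    apply G_eq_one ρV.toOps ρW.toOps hV.sup_eigenspaces hW.sup_eigenspaces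
    intro lam mu v w hv hw
    rw [Module.End.mul_apply, hQ lam mu v w hv hw, map_smul, hQ' lam mu v w hv hw,
      smul_smul, qc_mul_neg, one_smul]
  have hQQ' : Q * Q' = 1 := by
    apply G_eq_one ρV.toOps ρW.toOps hV.sup_eigenspaces hW.sup_eigenspaces
    intro lam mu v w hv hw
    rw [Module.End.mul_apply, hQ' lam mu v w hv hw, map_smul, hQ lam mu v w hv hw,
      smul_smul, mul_comm, qc_mul_neg, one_smul]
  constructor
  · refine LinearMap.ext fun x => ?_
    simp only [braidMap, braidMapInv, LinearMap.comp_apply, LinearEquiv.coe_coe,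
      LinearMap.id_coe, id_eq]
    rw [LinearEquiv.symm_apply_apply]
    rw [← Module.End.mul_apply Q' Q, hQ'Q, Module.End.one_apply]
    rw [← Module.End.mul_apply, hS1, Module.End.one_apply]
  · refine LinearMap.ext fun x => ?_
    simp only [braidMap, braidMapInv, LinearMap.comp_apply, LinearEquiv.coe_coe,
      LinearMap.id_coe, id_eq]
    rw [← Module.End.mul_apply (braidSum r ρV.toOps ρW.toOps)
        (braidSumInv r ρV.toOps ρW.toOps), hS2, Module.End.one_apply]
    rw [← Module.End.mul_apply Q Q', hQQ', Module.End.one_apply]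
    exact (TensorProduct.comm ℂ V W).apply_symm_apply x

end Unrolled
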